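/- For g⁺, g⁻ ∈ [0,1) and θ ∈ [1/4, 3/4], define g̃_θ := g if g ≤ θ and g̃_θ := g - 1 otherwise (applied to g⁺ and g⁻). Then the averaged difference satisfies ∫_{1/4}^{3/4} |g̃⁺_θ - g̃⁻_θ| dθ ≤ (5/2) · d(g⁺, g⁻), where d(g⁺,g⁻) := min(frac(g⁺ - g⁻), 1 - frac(g⁺ - g⁻)) is the quotient distance in ℝ/ℤ. -/

import Mathlib

/-- The lift `g̃_θ` of `g ∈ [0,1)`: `g` if `g ≤ θ`, and `g - 1` otherwise. -/
noncomputable def liftTheta (θ g : ℝ) : ℝ := if g ≤ θ then g else g - 1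

open MeasureTheory Set

lemma liftTheta_abs_eq (gm gp : ℝ) (h0 : 0 ≤ gm) (h1 : gp < 1) (hle : gm ≤ gp) (θ : ℝ) :
    |liftTheta θ gp - liftTheta θ gm| =
      (gp - gm) + (Set.Ico gm gp).indicator (fun _ => 1 - 2*(gp - gm)) θ := by
  unfold liftTheta
  by_cases hp : gp ≤ θ
  · have hm : gm ≤ θ := le_trans hle hp
    rw [if_pos hp, if_pos hm, Set.indicator_of_notMem (fun h => absurd hp (not_le.mpr h.2)),
      abs_of_nonneg (by linarith)]
    ring
  · by_cases hm : gm ≤ θ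
    · rw [if_neg hp, if_pos hm, Set.indicator_of_mem (Set.mem_Ico.mpr ⟨hm, not_le.mp hp⟩),
        abs_of_nonpos (by linarith)]
      ring
    · rw [if_neg hp, if_neg hm, Set.indicator_of_notMem (fun h => hm h.1),
        abs_of_nonneg (by linarith)]
      ring

set_option maxHeartbeats 1000000 in
lemma arith_bound (gm gp : ℝ) (h0 : 0 ≤ gm) (hle : gm ≤ gp) (h1 : gp < 1) :
    (gp - gm)/2 + max (min (3/4) gp - max (1/4) gm) 0 * (1 - 2*(gp - gm)) ≤
      5/2 * min (gp - gm) (1 - (gp - gm)) := by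
  rcases min_cases (3/4:ℝ) gp with ⟨hm, hm'⟩ | ⟨hm, hm'⟩ <;>
  rcases max_cases (1/4:ℝ) gm with ⟨hM, hM'⟩ | ⟨hM, hM'⟩ <;>
  rw [hm, hM] <;>
  rcases max_cases (min (3/4:ℝ) gp - max (1/4:ℝ) gm) 0 with ⟨hL, hL'⟩ | ⟨hL, hL'⟩ <;>
  rw [hm, hM] at hL hL' <;> rw [hL] <;>
  rcases min_cases (gp - gm) (1 - (gp - gm)) with ⟨hr, hr'⟩ | ⟨hr, hr'⟩ <;>
  rw [hr] <;>
  nlinarith [sq_nonneg (gp - gm - 9/8), sq_nonneg (gp - gm - 7/8), sq_nonneg (gp - gm - 1/2),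
    sq_nonneg (gp - gm), sq_nonneg (gp + gm - 5/4), sq_nonneg (gp + gm - 1)]

lemma key_lemma (gm gp : ℝ) (h0 : 0 ≤ gm) (h1 : gp < 1) (hle : gm ≤ gp) :
    ∫ θ in (1/4 : ℝ)..(3/4 : ℝ), |liftTheta θ gp - liftTheta θ gm| ≤
      (5/2) * min (gp - gm) (1 - (gp - gm)) := by
  have hInd : MeasureTheory.Integrable
      ((Set.Ico gm gp).indicator (fun _ => (1 - 2*(gp - gm)))) volume := by
    rw [MeasureTheory.integrable_indicator_iff measurableSet_Ico]
    exact integrableOn_const (by rw [Real.volume_Ico]; exact ENNReal.ofReal_ne_top)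
  have hcongr : (∫ θ in (1/4 : ℝ)..(3/4 : ℝ), |liftTheta θ gp - liftTheta θ gm|)
      = ∫ θ in (1/4 : ℝ)..(3/4 : ℝ),
          ((gp - gm) + (Set.Ico gm gp).indicator (fun _ => 1 - 2*(gp - gm)) θ) := by
    apply intervalIntegral.integral_congr
    intro θ _
    exact liftTheta_abs_eq gm gp h0 h1 hle θ
  rw [hcongr, intervalIntegral.integral_add (intervalIntegrable_const) hInd.intervalIntegrable,
    intervalIntegral.integral_const]
  have hvol : volume (Set.Ioc (1/4 : ℝ) (3/4) ∩ Set.Ico gm gp)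
      = ENNReal.ofReal (min (3/4) gp - max (1/4) gm) := by
    apply le_antisymm
    · calc volume (Set.Ioc (1/4 : ℝ) (3/4) ∩ Set.Ico gm gp)
          ≤ volume (Set.Icc (max (1/4 : ℝ) gm) (min (3/4 : ℝ) gp)) := by
            apply measure_mono
            intro x hx
            rw [Set.mem_inter_iff, Set.mem_Ioc, Set.mem_Ico] at hx
            rw [Set.mem_Icc]
            exact ⟨max_le hx.1.1.le hx.2.1, le_min hx.1.2 hx.2.2.le⟩
        _ = ENNReal.ofReal (min (3/4 : ℝ) gp - max (1/4 : ℝ) gm) := Real.volume_Icc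
    · rw [← Real.volume_Ioo]
      apply measure_mono
      intro x hx
      rw [Set.mem_Ioo] at hx
      rw [Set.mem_inter_iff, Set.mem_Ioc, Set.mem_Ico]
      refine ⟨⟨?_, ?_⟩, ?_, ?_⟩
      · exact lt_of_le_of_lt (le_max_left _ _) hx.1
      · exact hx.2.le.trans (min_le_left _ _)
      · exact (le_max_right _ _).trans hx.1.le
      · exact lt_of_lt_of_le hx.2 (min_le_right _ _)
  have hset : (∫ θ in (1/4 : ℝ)..(3/4 : ℝ),
      (Set.Ico gm gp).indicator (fun _ => 1 - 2*(gp - gm)) θ)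
      = max (min (3/4) gp - max (1/4) gm) 0 * (1 - 2*(gp - gm)) := by
    rw [intervalIntegral.integral_of_le (by norm_num),
      MeasureTheory.setIntegral_indicator measurableSet_Ico,
      MeasureTheory.setIntegral_const, measureReal_def, hvol, ENNReal.toReal_ofReal', smul_eq_mul]
  rw [hset]
  have harith := arith_bound gm gp h0 hle h1
  rw [smul_eq_mul]
  linarith

/-- Averaging over `θ ∈ [1/4, 3/4]`, the difference of the lifts of `g⁺, g⁻ ∈ [0,1)` is
controlled by the quotient distance in ℝ/ℤ:
`∫_{1/4}^{3/4} |g̃⁺_θ - g̃⁻_θ| dθ ≤ (5/2) · min (frac (g⁺ - g⁻), 1 - frac (g⁺ - g⁻))`. -/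
theorem integral_abs_liftTheta_sub_le (gp gm : ℝ)
    (hgp : gp ∈ Set.Ico (0 : ℝ) 1) (hgm : gm ∈ Set.Ico (0 : ℝ) 1) :
    ∫ θ in (1/4 : ℝ)..(3/4 : ℝ), |liftTheta θ gp - liftTheta θ gm| ≤
      (5/2) * min (Int.fract (gp - gm)) (1 - Int.fract (gp - gm)) := by
  obtain ⟨hgp0, hgp1⟩ := hgp
  obtain ⟨hgm0, hgm1⟩ := hgm
  rcases le_total gm gp with hle | hle
  · have hfr : Int.fract (gp - gm) = gp - gm :=
      Int.fract_eq_self.mpr ⟨by linarith, by linarith⟩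
    rw [hfr]
    exact key_lemma gm gp hgm0 hgp1 hle
  · have hcomm : (∫ θ in (1/4 : ℝ)..(3/4 : ℝ), |liftTheta θ gp - liftTheta θ gm|)
        = ∫ θ in (1/4 : ℝ)..(3/4 : ℝ), |liftTheta θ gm - liftTheta θ gp| := by
      apply intervalIntegral.integral_congr
      intro θ _
      exact abs_sub_comm _ _
    rcases eq_or_lt_of_le hle with heq | hlt
    · rw [heq]
      simp only [sub_self, Int.fract_zero]
      have := key_lemma gp gp hgp0 hgp1 le_rfl
      simp only [min_self, sub_zero] at this ⊢; simpa using this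
    · have hstep : Int.fract (gp - gm) = Int.fract (gp - gm + 1) := by
        have h := Int.fract_add_intCast (gp - gm) 1
        push_cast at h
        rw [h]
      have hfr : Int.fract (gp - gm) = gp - gm + 1 := by
        rw [hstep, Int.fract_eq_self.mpr ⟨by linarith, by linarith⟩]
      rw [hcomm, hfr]
      have hk := key_lemma gp gm hgp0 hgm1 hle
      have hmin : min (gp - gm + 1) (1 - (gp - gm + 1)) = min (gm - gp) (1 - (gm - gp)) := by
        rw [min_comm]
        congr 1 <;> ring
      rw [hmin]
      linarith [hk]
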